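/- The gcd of F_{k+1}·F_{r-k+2} and F_k·F_{r-k+1} equals F_{gcd(k+1, r+2)}·F_{gcd(k, r+2)}, for positive integers r, k with k ≤ r. -/

import Mathlib

lemma gcd_mul_mul_of_coprime (a b c d : ℕ) (hac : Nat.Coprime a c) (hbd : Nat.Coprime b d) :
    Nat.gcd (a * b) (c * d) = Nat.gcd a d * Nat.gcd b c := by
  apply Nat.dvd_antisymm
  · have h : Nat.gcd (a * b) (c * d) ∣ Nat.gcd (a * b) c * Nat.gcd (a * b) d :=
      gcd_mul_dvd_mul_gcd (a * b) c d
    rwa [hac.gcd_mul_left_cancel b, hbd.gcd_mul_right_cancel a, Nat.mul_comm (Nat.gcd b c)] at h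
  · refine Nat.dvd_gcd (Nat.mul_dvd_mul (Nat.gcd_dvd_left a d) (Nat.gcd_dvd_left b c)) ?_
    rw [mul_comm c d]
    exact Nat.mul_dvd_mul (Nat.gcd_dvd_right a d) (Nat.gcd_dvd_right b c)

theorem stmt_4 (r k : ℕ) (hr : 0 < r) (hk : 0 < k) (hkr : k ≤ r) :
    Nat.gcd (Nat.fib (k + 1) * Nat.fib (r - k + 2)) (Nat.fib k * Nat.fib (r - k + 1)) =
      Nat.fib (Nat.gcd (k + 1) (r + 2)) * Nat.fib (Nat.gcd k (r + 2)) := by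
  have hac : Nat.Coprime (Nat.fib (k + 1)) (Nat.fib k) :=
    (Nat.fib_coprime_fib_succ k).symm
  have hbd : Nat.Coprime (Nat.fib (r - k + 2)) (Nat.fib (r - k + 1)) := by
    have := (Nat.fib_coprime_fib_succ (r - k + 1)).symm
    simpa using this
  rw [gcd_mul_mul_of_coprime _ _ _ _ hac hbd, ← Nat.fib_gcd, ← Nat.fib_gcd]
  have e1 : r - k + 1 = (r + 2) - (k + 1) := by omega
  have e2 : r - k + 2 = (r + 2) - k := by omega
  rw [e1, Nat.gcd_sub_self_right (by omega), e2, Nat.gcd_comm (r + 2 - k) k,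
    Nat.gcd_sub_self_right (by omega)]
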